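/- Let P be a finite set of n points in ℝ^d, let C̃ = {c̃_1,...,c̃_k} ⊂ ℝ^d, let z be an integer with 1 ≤ z < n, and let P' ⊆ P with |P'| = n − z be the set of the n − z points of P closest to C̃ (i.e., with smallest values of min_j ‖p − c̃_j‖). Let ε > 0 and suppose r > 0 and N ∈ ℕ are such that exactly (1 + 1/ε)·z points of P lie outside the union of balls ⋃_j B(c̃_j, 2^N r). Then 2^N · r ≤ (ε/z) · Σ_{p ∈ P'} min_{1≤j≤k} ‖p − c̃_j‖. -/

import Mathlib

open Finset

/-- Distance from a point `p` to the nearest of the `k` centers `c`. -/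
noncomputable def minDist {d k : ℕ} [Nonempty (Fin k)]
    (c : Fin k → EuclideanSpace ℝ (Fin d)) (p : EuclideanSpace ℝ (Fin d)) : ℝ :=
  Finset.univ.inf' Finset.univ_nonempty (fun j => dist p (c j))

theorem stmt0 {d k : ℕ} [Nonempty (Fin k)]
    (P P' : Finset (EuclideanSpace ℝ (Fin d)))
    (c : Fin k → EuclideanSpace ℝ (Fin d))
    (n z N : ℕ) (ε r : ℝ)
    (hn : P.card = n) (hz : 1 ≤ z) (hzn : z < n)
    (hε : 0 < ε) (hr : 0 < r)
    (hsub : P' ⊆ P) (hcard : P'.card + z = n)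
    (hclosest : ∀ p ∈ P', ∀ q ∈ P, q ∉ P' → minDist c p ≤ minDist c q)
    (hout : (({p ∈ (P : Set (EuclideanSpace ℝ (Fin d))) |
        ∀ j, (2:ℝ)^N * r < dist p (c j)}).ncard : ℝ) = (1 + 1/ε) * z) :
    (2:ℝ)^N * r ≤ (ε / z) * ∑ p ∈ P', minDist c p := by
  classical
  set S : Finset (EuclideanSpace ℝ (Fin d)) :=
    P.filter (fun p => ∀ j, (2:ℝ)^N * r < dist p (c j)) with hS
  have hsetS : ({p ∈ (P : Set (EuclideanSpace ℝ (Fin d))) |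
      ∀ j, (2:ℝ)^N * r < dist p (c j)}) = (S : Set (EuclideanSpace ℝ (Fin d))) := by
    ext p; simp [hS]
  rw [hsetS, Set.ncard_coe_finset] at hout
  have hSsubP : S ⊆ P := filter_subset _ _
  -- |S \ P'| ≤ |P \ P'| = z
  have hdiff : (S \ P').card ≤ z := by
    have h1 : (S \ P').card ≤ (P \ P').card :=
      card_le_card (sdiff_subset_sdiff hSsubP le_rfl)
    have h2 : (P \ P').card = z := by
      rw [card_sdiff_of_subset hsub]
      omega
    omega
  have hinter : S.card ≤ (S ∩ P').card + z := by
    have h := card_sdiff_add_card_eq_card (inter_subset_left (s₂ := P') (s₁ := S))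
    have hsd : S \ (S ∩ P') = S \ P' := by
      ext x; simp
    rw [hsd] at h
    omega
  -- in ℝ: (S ∩ P').card ≥ z/ε
  have hzpos : (0:ℝ) < z := by exact_mod_cast hz
  have hcardR : ((z:ℝ)/ε) ≤ ((S ∩ P').card : ℝ) := by
    have h1 : (S.card : ℝ) ≤ ((S ∩ P').card : ℝ) + z := by exact_mod_cast hinter
    rw [hout] at h1
    have : (1 + 1/ε) * z = z/ε + z := by field_simp; ring
    linarith [this ▸ h1]
  -- each point of S has minDist ≥ 2^N r
  have hmd : ∀ p ∈ S, (2:ℝ)^N * r ≤ minDist c p := by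
    intro p hp
    rw [hS, mem_filter] at hp
    rw [minDist]
    exact le_inf' _ _ fun j _ => (hp.2 j).le
  have hmd0 : ∀ p, 0 ≤ minDist c p := by
    intro p
    rw [minDist]
    exact le_inf' _ _ fun j _ => dist_nonneg
  have hrpos : (0:ℝ) ≤ (2:ℝ)^N * r := by positivity
  have hsum : ((S ∩ P').card : ℝ) * ((2:ℝ)^N * r) ≤ ∑ p ∈ P', minDist c p := by
    calc ((S ∩ P').card : ℝ) * ((2:ℝ)^N * r)
        = ∑ _p ∈ S ∩ P', (2:ℝ)^N * r := by rw [sum_const, nsmul_eq_mul]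
      _ ≤ ∑ p ∈ S ∩ P', minDist c p :=
          sum_le_sum fun p hp => hmd p (mem_of_mem_inter_left hp)
      _ ≤ ∑ p ∈ P', minDist c p :=
          sum_le_sum_of_subset_of_nonneg inter_subset_right
            (fun p _ _ => hmd0 p)
  have key : ((z:ℝ)/ε) * ((2:ℝ)^N * r) ≤ ∑ p ∈ P', minDist c p := by
    calc ((z:ℝ)/ε) * ((2:ℝ)^N * r) ≤ ((S ∩ P').card : ℝ) * ((2:ℝ)^N * r) :=
          mul_le_mul_of_nonneg_right hcardR hrpos
      _ ≤ _ := hsum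
  calc (2:ℝ)^N * r = (ε/z) * ((z:ℝ)/ε * ((2:ℝ)^N * r)) := by field_simp
    _ ≤ (ε / z) * ∑ p ∈ P', minDist c p :=
        mul_le_mul_of_nonneg_left key (by positivity)
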